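/- For every feasible point of the MICP formulation there exists a feasible point of the nonconvex formulation with the same objective value. Consequently, the optimal value of the nonconvex formulation is at most the optimal value of the MICP formulation. -/
import Mathlib


open scoped BigOperators Classical

noncomputable section

/-- The Euclidean plane ℝ². -/
abbrev Plane := EuclideanSpace ℝ (Fin 2)

/-- Nodes of the graph: `Sum.inl i` is the segment node `i ∈ V_seg`,
`Sum.inr false` is the depot `s`, and `Sum.inr true` is the depot copy `s'`. -/
abbrev Node (ι : Type*) := ι ⊕ Bool

/-- The data of an MA-MT-TSP instance: a finite type `ι` of segment nodes, a finite
type `υ` of targets, a cluster assignment `cl` whose surjectivity expresses that every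
cluster is nonempty, time windows `tlo i ≤ thi i`, start positions `pos`, velocities
`vel` (vanishing at the depot and its copy), a maximum speed `vmax > 0`, and a number
of agents `m ≥ 1`. -/
structure MTData (ι υ : Type*) where
  cl : ι → υ
  cl_surj : Function.Surjective cl
  tlo : Node ι → ℝ
  thi : Node ι → ℝ
  tw : ∀ i, tlo i ≤ thi i
  pos : Node ι → Plane
  vel : Node ι → Plane
  vel_s : vel (Sum.inr false) = 0
  vel_s' : vel (Sum.inr true) = 0
  vmax : ℝ
  vmax_pos : 0 < vmax
  m : ℕ
  m_pos : 1 ≤ m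

variable {ι υ : Type*} [Fintype ι] [Fintype υ]

/-- The edge relation: from the depot `s` to every segment node, between segment nodes
in different clusters, and from every segment node to the depot copy `s'`. -/
def isEdge (D : MTData ι υ) : Node ι → Node ι → Prop
  | Sum.inr false, Sum.inl _ => True
  | Sum.inl i, Sum.inl j => D.cl i ≠ D.cl j
  | Sum.inl _, Sum.inr true => True
  | _, _ => False

/-- The edge set `E` as a finite set of ordered pairs of nodes. -/
def edges (D : MTData ι υ) : Finset (Node ι × Node ι) :=
  Finset.univ.filter fun e => isEdge D e.1 e.2

/-- `E_i^in`: the edges of `E` entering node `i`. -/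
def inE (D : MTData ι υ) (i : Node ι) : Finset (Node ι × Node ι) :=
  (edges D).filter fun e => e.2 = i

/-- `E_i^out`: the edges of `E` exiting node `i`. -/
def outE (D : MTData ι υ) (i : Node ι) : Finset (Node ι × Node ι) :=
  (edges D).filter fun e => e.1 = i

/-- A point of the nonconvex formulation: edge variables `y`, `l`, `lxy`, `zp`, `zt`,
`zp'`, `zt'` for each edge and agent, and node variables `t`, `p` for each node and
agent.  Agents are indexed by `Fin m`. -/
structure NCPoint (ι : Type*) (m : ℕ) where
  y : Node ι × Node ι → Fin m → ℝ
  l : Node ι × Node ι → Fin m → ℝ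
  lxy : Node ι × Node ι → Fin m → Plane
  zp : Node ι × Node ι → Fin m → Plane
  zt : Node ι × Node ι → Fin m → ℝ
  zp' : Node ι × Node ι → Fin m → Plane
  zt' : Node ι × Node ι → Fin m → ℝ
  t : Node ι → Fin m → ℝ
  p : Node ι → Fin m → Plane

variable {ι υ : Type*} [Fintype ι] [Fintype υ]

/-- Feasibility for the nonconvex formulation. -/
def NCFeas (D : MTData ι υ) (P : NCPoint ι D.m) : Prop :=
  (∀ e ∈ edges D, ∀ k, P.y e k = 0 ∨ P.y e k = 1) ∧
  (∀ e ∈ edges D, ∀ k, 0 ≤ P.l e k) ∧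
  (∀ k, ∑ e ∈ outE D (Sum.inr false), P.y e k ≤ 1) ∧
  (∀ k, ∑ e ∈ inE D (Sum.inr true), P.y e k ≤ 1) ∧
  (∀ u : υ, ∑ k, ∑ i ∈ Finset.univ.filter (fun i => D.cl i = u),
      ∑ e ∈ inE D (Sum.inl i), P.y e k = 1) ∧
  (∀ i : ι, ∀ k, ∑ e ∈ inE D (Sum.inl i), P.y e k = ∑ e ∈ outE D (Sum.inl i), P.y e k) ∧
  (∀ i : Node ι, ∀ k, D.tlo i ≤ P.t i k ∧ P.t i k ≤ D.thi i) ∧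
  (∀ i : Node ι, ∀ k, P.p i k = D.pos i + (P.t i k - D.tlo i) • D.vel i) ∧
  (∀ e ∈ edges D, ∀ k,
    P.zp e k = P.y e k • P.p e.1 k ∧
    P.zt e k = P.y e k * P.t e.1 k ∧
    P.zp' e k = P.y e k • P.p e.2 k ∧
    P.zt' e k = P.y e k * P.t e.2 k ∧
    P.l e k ≤ D.vmax * (P.zt' e k - P.zt e k) ∧
    P.lxy e k = P.zp' e k - P.zp e k ∧
    ‖P.lxy e k‖ ^ 2 ≤ P.l e k ^ 2)

/-- Objective of the nonconvex formulation. -/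
def NCObj (D : MTData ι υ) (P : NCPoint ι D.m) : ℝ :=
  ∑ k, ∑ e ∈ edges D, P.l e k

/-- A point of the MICP formulation: a single set of edge variables, together with the
integer depot flow `α` (stated as a real number required to be integral). -/
structure MICPPoint (ι : Type*) where
  y : Node ι × Node ι → ℝ
  l : Node ι × Node ι → ℝ
  lxy : Node ι × Node ι → Plane
  zp : Node ι × Node ι → Plane
  zt : Node ι × Node ι → ℝ
  zp' : Node ι × Node ι → Plane
  zt' : Node ι × Node ι → ℝ
  α : ℝ

/-- Feasibility for the MICP formulation. -/
def MICPFeas (D : MTData ι υ) (Q : MICPPoint ι) : Prop :=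
  (∀ e ∈ edges D, Q.y e = 0 ∨ Q.y e = 1) ∧
  (∀ e ∈ edges D, 0 ≤ Q.l e) ∧
  (∃ n : ℤ, Q.α = n) ∧ (1 ≤ Q.α) ∧ (Q.α ≤ (D.m : ℝ)) ∧
  (∑ e ∈ outE D (Sum.inr false), Q.y e = Q.α) ∧
  (∑ e ∈ inE D (Sum.inr true), Q.y e = Q.α) ∧
  (∀ u : υ, ∑ i ∈ Finset.univ.filter (fun i => D.cl i = u),
      ∑ e ∈ inE D (Sum.inl i), Q.y e = 1) ∧
  (∀ i : ι, ∑ e ∈ inE D (Sum.inl i), Q.y e = ∑ e ∈ outE D (Sum.inl i), Q.y e) ∧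
  (∀ i : ι, ∑ e ∈ inE D (Sum.inl i), Q.zt' e = ∑ e ∈ outE D (Sum.inl i), Q.zt e) ∧
  (∀ e ∈ edges D,
    Q.y e * D.tlo e.1 ≤ Q.zt e ∧ Q.zt e ≤ Q.y e * D.thi e.1 ∧
    Q.y e * D.tlo e.2 ≤ Q.zt' e ∧ Q.zt' e ≤ Q.y e * D.thi e.2 ∧
    Q.zp e = Q.zt e • D.vel e.1 + Q.y e • (D.pos e.1 - D.tlo e.1 • D.vel e.1) ∧
    Q.zp' e = Q.zt' e • D.vel e.2 + Q.y e • (D.pos e.2 - D.tlo e.2 • D.vel e.2) ∧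
    Q.l e ≤ D.vmax * (Q.zt' e - Q.zt e) ∧
    Q.lxy e = Q.zp' e - Q.zp e ∧
    ‖Q.lxy e‖ ^ 2 ≤ Q.l e ^ 2)

/-- Objective of the MICP formulation. -/
def MICPObj (D : MTData ι υ) (Q : MICPPoint ι) : ℝ :=
  ∑ e ∈ edges D, Q.l e

section Aux

variable {ι υ : Type*} [Fintype ι] [Fintype υ]

lemma mem_edges {D : MTData ι υ} {e : Node ι × Node ι} :
    e ∈ edges D ↔ isEdge D e.1 e.2 := by simp [edges]

lemma mem_inE {D : MTData ι υ} {i : Node ι} {e : Node ι × Node ι} :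
    e ∈ inE D i ↔ e ∈ edges D ∧ e.2 = i := by simp [inE]

lemma mem_outE {D : MTData ι υ} {i : Node ι} {e : Node ι × Node ι} :
    e ∈ outE D i ↔ e ∈ edges D ∧ e.1 = i := by simp [outE]

lemma edge_fst_ne {D : MTData ι υ} {e : Node ι × Node ι} (he : e ∈ edges D) :
    e.1 ≠ Sum.inr true := by
  rw [mem_edges] at he
  rcases e with ⟨a, b⟩
  rcases a with i | _ | _ <;> rcases b with j | _ | _ <;> simp_all [isEdge]

lemma edge_snd_ne {D : MTData ι υ} {e : Node ι × Node ι} (he : e ∈ edges D) :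
    e.2 ≠ Sum.inr false := by
  rw [mem_edges] at he
  rcases e with ⟨a, b⟩
  rcases a with i | _ | _ <;> rcases b with j | _ | _ <;> simp_all [isEdge]

lemma edge_fst_cases {D : MTData ι υ} {e : Node ι × Node ι} (he : e ∈ edges D) :
    (∃ i, e.1 = Sum.inl i) ∨ e.1 = Sum.inr false := by
  rcases h : e.1 with i | b
  · exact Or.inl ⟨i, rfl⟩
  · rcases b with _ | _
    · exact Or.inr rfl
    · exact absurd h (edge_fst_ne he)

lemma edge_snd_cases {D : MTData ι υ} {e : Node ι × Node ι} (he : e ∈ edges D) :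
    (∃ j, e.2 = Sum.inl j) ∨ e.2 = Sum.inr true := by
  rcases h : e.2 with j | b
  · exact Or.inl ⟨j, rfl⟩
  · rcases b with _ | _
    · exact absurd h (edge_snd_ne he)
    · exact Or.inr rfl

lemma edge_snd_of_fst_s {D : MTData ι υ} {e : Node ι × Node ι} (he : e ∈ edges D)
    (h : e.1 = Sum.inr false) : ∃ j, e.2 = Sum.inl j := by
  rw [mem_edges] at he
  rcases e with ⟨a, b⟩
  simp only at h; subst h
  rcases b with j | _ | _ <;> simp_all [isEdge]

/-- helper: a sum of 0/1 values with at most one support element is ≤ 1 -/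
lemma sum01_le_one {α : Type*} {s : Finset α} {f : α → ℝ}
    (h01 : ∀ e ∈ s, f e = 0 ∨ f e = 1)
    (huniq : ∀ e ∈ s, ∀ e' ∈ s, f e = 1 → f e' = 1 → e = e') :
    ∑ e ∈ s, f e ≤ 1 := by
  classical
  rw [← Finset.sum_filter_add_sum_filter_not s (fun e => f e = 1)]
  have h2 : ∑ e ∈ s.filter (fun e => ¬ f e = 1), f e = 0 := by
    apply Finset.sum_eq_zero
    intro e he
    rw [Finset.mem_filter] at he
    rcases h01 e he.1 with h | h
    · exact h
    · exact absurd h he.2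
  rw [h2, add_zero]
  have h3 : ∑ e ∈ s.filter (fun e => f e = 1), f e
      = (s.filter (fun e => f e = 1)).card • (1 : ℝ) := by
    rw [Finset.sum_congr rfl (fun e he => (Finset.mem_filter.mp he).2),
      Finset.sum_const]
  rw [h3, nsmul_eq_mul, mul_one]
  have h4 : (s.filter (fun e => f e = 1)).card ≤ 1 := by
    apply Finset.card_le_one.mpr
    intro a ha b hb
    rw [Finset.mem_filter] at ha hb
    exact huniq a ha.1 b hb.1 ha.2 hb.2
  exact_mod_cast h4

end Aux
set_option linter.unusedSectionVars false
set_option maxHeartbeats 1000000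

section MICPLemmas

variable {ι υ : Type*} [Fintype ι] [Fintype υ] (D : MTData ι υ) (Q : MICPPoint ι)

/-- An edge is used if it is in the edge set and carries flow 1. -/
def usedE (e : Node ι × Node ι) : Prop := e ∈ edges D ∧ Q.y e = 1

variable {D Q}

section Feas
variable (hQ : MICPFeas D Q)
include hQ

lemma y_nonneg {e : Node ι × Node ι} (he : e ∈ edges D) : 0 ≤ Q.y e := by
  rcases hQ.1 e he with h | h <;> rw [h] <;> norm_num

lemma y_unused {e : Node ι × Node ι} (he : e ∈ edges D) (hu : ¬ usedE D Q e) :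
    Q.y e = 0 := by
  rcases hQ.1 e he with h | h
  · exact h
  · exact absurd ⟨he, h⟩ hu

lemma zt_unused {e : Node ι × Node ι} (he : e ∈ edges D) (hu : ¬ usedE D Q e) :
    Q.zt e = 0 ∧ Q.zt' e = 0 ∧ Q.l e = 0 := by
  obtain ⟨h1, h2, h3, h4, -⟩ := hQ.2.2.2.2.2.2.2.2.2.2 e he
  have hy := y_unused hQ he hu
  rw [hy, zero_mul] at h1 h2 h3 h4
  have hzt : Q.zt e = 0 := le_antisymm h2 h1
  have hzt' : Q.zt' e = 0 := le_antisymm h4 h3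
  refine ⟨hzt, hzt', le_antisymm ?_ (hQ.2.1 e he)⟩
  have := (hQ.2.2.2.2.2.2.2.2.2.2 e he).2.2.2.2.2.2.1
  rw [hzt, hzt'] at this
  simpa using this

/-- total in-flow at a segment node is at most 1 -/
lemma in_le_one (i : ι) : ∑ e ∈ inE D (Sum.inl i), Q.y e ≤ 1 := by
  have hclu := hQ.2.2.2.2.2.2.2.1 (D.cl i)
  calc ∑ e ∈ inE D (Sum.inl i), Q.y e
      ≤ ∑ i' ∈ Finset.univ.filter (fun i' => D.cl i' = D.cl i),
          ∑ e ∈ inE D (Sum.inl i'), Q.y e := by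
        apply Finset.single_le_sum (f := fun i' => ∑ e ∈ inE D (Sum.inl i'), Q.y e)
        · intro j _
          exact Finset.sum_nonneg fun e he => y_nonneg hQ (Finset.mem_filter.mp he).1
        · simp
    _ = 1 := hclu

lemma out_le_one (i : ι) : ∑ e ∈ outE D (Sum.inl i), Q.y e ≤ 1 := by
  rw [← hQ.2.2.2.2.2.2.2.2.1 i]; exact in_le_one hQ i

/-- U1: unique used in-edge at a segment node -/
lemma in_unique {i : ι} {e f : Node ι × Node ι} (he : usedE D Q e) (hf : usedE D Q f)
    (he2 : e.2 = Sum.inl i) (hf2 : f.2 = Sum.inl i) : e = f := by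
  by_contra hne
  have hsub : {e, f} ⊆ inE D (Sum.inl i) := by
    intro x hx
    rcases Finset.mem_insert.mp hx with h | h
    · subst h; exact mem_inE.mpr ⟨he.1, he2⟩
    · rw [Finset.mem_singleton] at h; subst h; exact mem_inE.mpr ⟨hf.1, hf2⟩
  have : (2 : ℝ) ≤ ∑ e' ∈ inE D (Sum.inl i), Q.y e' := by
    have h2 : ∑ x ∈ ({e, f} : Finset _), Q.y x = 2 := by
      rw [Finset.sum_pair hne, he.2, hf.2]; norm_num
    rw [← h2]
    exact Finset.sum_le_sum_of_subset_of_nonneg hsub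
      (fun x hx _ => y_nonneg hQ (Finset.mem_filter.mp hx).1)
  linarith [in_le_one hQ (Q := Q) i]

/-- U2: unique used out-edge at a segment node -/
lemma out_unique {i : ι} {e f : Node ι × Node ι} (he : usedE D Q e) (hf : usedE D Q f)
    (he1 : e.1 = Sum.inl i) (hf1 : f.1 = Sum.inl i) : e = f := by
  by_contra hne
  have hsub : {e, f} ⊆ outE D (Sum.inl i) := by
    intro x hx
    rcases Finset.mem_insert.mp hx with h | h
    · subst h; exact mem_outE.mpr ⟨he.1, he1⟩
    · rw [Finset.mem_singleton] at h; subst h; exact mem_outE.mpr ⟨hf.1, hf1⟩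
  have : (2 : ℝ) ≤ ∑ e' ∈ outE D (Sum.inl i), Q.y e' := by
    have h2 : ∑ x ∈ ({e, f} : Finset _), Q.y x = 2 := by
      rw [Finset.sum_pair hne, he.2, hf.2]; norm_num
    rw [← h2]
    exact Finset.sum_le_sum_of_subset_of_nonneg hsub
      (fun x hx _ => y_nonneg hQ (Finset.mem_filter.mp hx).1)
  linarith [out_le_one hQ (Q := Q) i]

/-- U3: a used in-edge at a segment node forces a used out-edge -/
lemma out_exists {i : ι} {e : Node ι × Node ι} (he : usedE D Q e)
    (he2 : e.2 = Sum.inl i) : ∃ f, usedE D Q f ∧ f.1 = Sum.inl i := by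
  have h1 : (1:ℝ) ≤ ∑ e' ∈ inE D (Sum.inl i), Q.y e' := by
    have := Finset.single_le_sum (f := Q.y)
      (fun x hx => y_nonneg hQ (Finset.mem_filter.mp hx).1)
      (mem_inE.mpr ⟨he.1, he2⟩)
    rw [he.2] at this; exact this
  rw [hQ.2.2.2.2.2.2.2.2.1 i] at h1
  have : ∑ e' ∈ outE D (Sum.inl i), Q.y e' ≠ 0 := by linarith
  obtain ⟨f, hf, hfne⟩ := Finset.exists_ne_zero_of_sum_ne_zero this
  obtain ⟨hfe, hf1⟩ := mem_outE.mp hf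
  rcases hQ.1 f hfe with h | h
  · exact absurd h hfne
  · exact ⟨f, ⟨hfe, h⟩, hf1⟩

/-- U3': a used out-edge at a segment node forces a used in-edge -/
lemma in_exists {i : ι} {e : Node ι × Node ι} (he : usedE D Q e)
    (he1 : e.1 = Sum.inl i) : ∃ f, usedE D Q f ∧ f.2 = Sum.inl i := by
  have h1 : (1:ℝ) ≤ ∑ e' ∈ outE D (Sum.inl i), Q.y e' := by
    have := Finset.single_le_sum (f := Q.y)
      (fun x hx => y_nonneg hQ (Finset.mem_filter.mp hx).1)
      (mem_outE.mpr ⟨he.1, he1⟩)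
    rw [he.2] at this; exact this
  rw [← hQ.2.2.2.2.2.2.2.2.1 i] at h1
  have : ∑ e' ∈ inE D (Sum.inl i), Q.y e' ≠ 0 := by linarith
  obtain ⟨f, hf, hfne⟩ := Finset.exists_ne_zero_of_sum_ne_zero this
  obtain ⟨hfe, hf2⟩ := mem_inE.mp hf
  rcases hQ.1 f hfe with h | h
  · exact absurd h hfne
  · exact ⟨f, ⟨hfe, h⟩, hf2⟩

/-- U4: time continuity at a segment node -/
lemma zt_link {i : ι} {e f : Node ι × Node ι} (he : usedE D Q e) (hf : usedE D Q f)
    (he2 : e.2 = Sum.inl i) (hf1 : f.1 = Sum.inl i) : Q.zt' e = Q.zt f := by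
  have hzc := hQ.2.2.2.2.2.2.2.2.2.1 i
  have hL : ∑ e' ∈ inE D (Sum.inl i), Q.zt' e' = Q.zt' e := by
    apply Finset.sum_eq_single_of_mem e (mem_inE.mpr ⟨he.1, he2⟩)
    intro g hg hgne
    obtain ⟨hge, hg2⟩ := mem_inE.mp hg
    have hgu : ¬ usedE D Q g := fun hgu => hgne (in_unique hQ hgu he hg2 he2)
    exact (zt_unused hQ hge hgu).2.1
  have hR : ∑ e' ∈ outE D (Sum.inl i), Q.zt e' = Q.zt f := by
    apply Finset.sum_eq_single_of_mem f (mem_outE.mpr ⟨hf.1, hf1⟩)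
    intro g hg hgne
    obtain ⟨hge, hg1⟩ := mem_outE.mp hg
    have hgu : ¬ usedE D Q g := fun hgu => hgne (out_unique hQ hgu hf hg1 hf1)
    exact (zt_unused hQ hge hgu).1
  rw [← hL, ← hR, hzc]

end Feas
end MICPLemmas
section Chains

variable {ι υ : Type*} [Fintype ι] [Fintype υ] (D : MTData ι υ) (Q : MICPPoint ι)

/-- The step relation between consecutive used edges. -/
def Rstep (e f : Node ι × Node ι) : Prop := usedE D Q e ∧ usedE D Q f ∧ e.2 = f.1

/-- `chain n f e` : `f` reaches `e` in exactly `n` steps. -/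
def chain : ℕ → (Node ι × Node ι) → (Node ι × Node ι) → Prop
  | 0, f, e => f = e
  | n+1, f, e => ∃ c, chain n f c ∧ Rstep D Q c e

variable {D Q}

lemma chain_head {g f e : Node ι × Node ι} {n : ℕ} (hgf : Rstep D Q g f)
    (h : chain D Q n f e) : chain D Q (n+1) g e := by
  induction n generalizing e with
  | zero => exact ⟨g, rfl, by rwa [show f = e from h] at hgf⟩
  | succ n ih =>
    obtain ⟨c, hc, hR⟩ := h
    exact ⟨c, ih hc, hR⟩

lemma chain_toRTG {f e : Node ι × Node ι} {n : ℕ} (h : chain D Q n f e) :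
    Relation.ReflTransGen (Rstep D Q) f e := by
  induction n generalizing e with
  | zero => rw [show f = e from h]
  | succ n ih =>
    obtain ⟨c, hc, hR⟩ := h
    exact Relation.ReflTransGen.tail (ih hc) hR

lemma RTG_toChain {f e : Node ι × Node ι}
    (h : Relation.ReflTransGen (Rstep D Q) f e) : ∃ n, chain D Q n f e := by
  induction h with
  | refl => exact ⟨0, rfl⟩
  | tail _ hR ih => obtain ⟨n, hn⟩ := ih; exact ⟨n+1, _, hn, hR⟩

/-- target of a step from a used edge is at a segment node -/
lemma Rstep_snd_inl {c e : Node ι × Node ι} (h : Rstep D Q c e) :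
    ∃ i, e.1 = Sum.inl i ∧ c.2 = Sum.inl i := by
  obtain ⟨hc, he, hce⟩ := h
  rcases edge_snd_cases hc.1 with ⟨j, hj⟩ | hj
  · exact ⟨j, by rw [← hce, hj], hj⟩
  · exact absurd (by rw [← hce, hj]) (edge_fst_ne he.1)

section Feas
variable (hQ : MICPFeas D Q)
include hQ

lemma chain_unique {f e e' : Node ι × Node ι} {n : ℕ} (h : chain D Q n f e)
    (h' : chain D Q n f e') : e = e' := by
  induction n generalizing e e' with
  | zero => rw [← show f = e from h, show f = e' from h']
  | succ n ih =>
    obtain ⟨c, hc, hR⟩ := h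
    obtain ⟨c', hc', hR'⟩ := h'
    have hcc : c = c' := ih hc hc'
    subst hcc
    obtain ⟨i, hi, hci⟩ := Rstep_snd_inl hR
    obtain ⟨i', hi', hci'⟩ := Rstep_snd_inl hR'
    rw [hci] at hci'
    have : i = i' := by injection hci'
    subst this
    exact out_unique hQ hR.2.1 hR'.2.1 hi hi'

lemma chain_sub {f e e' : Node ι × Node ι} {n m : ℕ} (hnm : n ≤ m)
    (h : chain D Q n f e) (h' : chain D Q m f e') : chain D Q (m - n) e e' := by
  induction m generalizing e' with
  | zero =>
    have : n = 0 := Nat.le_zero.mp hnm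
    subst this
    rw [← show f = e from h]
    exact h'
  | succ m ih =>
    rcases Nat.lt_or_ge n (m+1) with hlt | hge
    · have hnm' : n ≤ m := Nat.lt_succ_iff.mp hlt
      obtain ⟨c, hc, hR⟩ := h'
      have := ih hnm' hc
      have heq : m + 1 - n = (m - n) + 1 := by omega
      rw [heq]
      exact ⟨c, this, hR⟩
    · have : n = m + 1 := le_antisymm hnm hge
      subst this
      rw [chain_unique hQ h h', Nat.sub_self]
      rfl

lemma chain_pos_succ {a b : Node ι × Node ι} {n : ℕ} (h : chain D Q (n+1) a b) :
    ∃ c, Rstep D Q a c := by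
  induction n generalizing b with
  | zero => obtain ⟨c, hc, hR⟩ := h; exact ⟨b, by rwa [show a = c from hc]⟩
  | succ n ih => obtain ⟨c, hc, _⟩ := h; exact ih hc

end Feas
end Chains
section Colors

variable {ι υ : Type*} [Fintype ι] [Fintype υ] (D : MTData ι υ) (Q : MICPPoint ι)

/-- used edges leaving the depot -/
def sOutF : Finset (Node ι × Node ι) :=
  (outE D (Sum.inr false)).filter (fun e => Q.y e = 1)

variable {D Q}

lemma mem_sOutF {e : Node ι × Node ι} :
    e ∈ sOutF D Q ↔ usedE D Q e ∧ e.1 = Sum.inr false := by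
  simp only [sOutF, Finset.mem_filter, mem_outE, usedE]
  tauto

section Feas
variable (hQ : MICPFeas D Q)
include hQ

/-- AU (chain version): unique depot ancestor -/
lemma anc_unique_chain {e a1 a2 : Node ι × Node ι} {n : ℕ}
    (h1 : a1 ∈ sOutF D Q) (h2 : a2 ∈ sOutF D Q) (hc : chain D Q n a1 e)
    (hr : Relation.ReflTransGen (Rstep D Q) a2 e) : a1 = a2 := by
  induction n generalizing e with
  | zero =>
    rcases Relation.ReflTransGen.cases_tail hr with h | ⟨c, _, hR⟩
    · exact hc.trans h
    · obtain ⟨i, hi, _⟩ := Rstep_snd_inl hR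
      rw [← (show a1 = e from hc), (mem_sOutF.mp h1).2] at hi
      exact absurd hi.symm (by simp)
  | succ n ih =>
    obtain ⟨c, hc', hR⟩ := hc
    obtain ⟨i, hi, hci⟩ := Rstep_snd_inl hR
    rcases Relation.ReflTransGen.cases_tail hr with h | ⟨c2, hr2, hR2⟩
    · exfalso
      rw [h, (mem_sOutF.mp h2).2] at hi
      simp at hi
    · obtain ⟨i2, hi2, hc2i⟩ := Rstep_snd_inl hR2
      rw [hi] at hi2
      have : i = i2 := by injection hi2
      subst this
      have : c = c2 := in_unique hQ hR.1 hR2.1 hci hc2i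
      subst this
      exact ih hc' hr2

/-- AU -/
lemma anc_unique {e a1 a2 : Node ι × Node ι}
    (h1 : a1 ∈ sOutF D Q) (h2 : a2 ∈ sOutF D Q)
    (hr1 : Relation.ReflTransGen (Rstep D Q) a1 e)
    (hr2 : Relation.ReflTransGen (Rstep D Q) a2 e) : a1 = a2 := by
  obtain ⟨n, hn⟩ := RTG_toChain hr1
  exact anc_unique_chain hQ h1 h2 hn hr2

/-- EX: every used edge into `s'` has a depot ancestor -/
lemma anc_exists {e : Node ι × Node ι} (he : usedE D Q e) (he2 : e.2 = Sum.inr true) :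
    ∃ a, a ∈ sOutF D Q ∧ Relation.ReflTransGen (Rstep D Q) a e := by
  by_contra hcon
  push_neg at hcon
  have key : ∀ n : ℕ, ∃ f, usedE D Q f ∧ chain D Q n f e := by
    intro n
    induction n with
    | zero => exact ⟨e, he, rfl⟩
    | succ n ih =>
      obtain ⟨f, hf, hc⟩ := ih
      rcases edge_fst_cases hf.1 with ⟨i, hi⟩ | hi
      · obtain ⟨g', hg', hg2⟩ := in_exists hQ hf hi
        exact ⟨g', hg', chain_head ⟨hg', hf, by rw [hg2, hi]⟩ hc⟩
      · exfalso
        exact hcon f (mem_sOutF.mpr ⟨hf, hi⟩) (chain_toRTG hc)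
  choose F hFu hFc using key
  obtain ⟨a, b, hab, hFab⟩ := Finite.exists_ne_map_eq_of_infinite F
  wlog hlt : a < b generalizing a b
  · exact this b a hab.symm hFab.symm (by omega)
  have hcb : chain D Q b (F a) e := hFab ▸ hFc b
  have := chain_sub hQ (le_of_lt hlt) (by
      have : chain D Q a (F a) e := hFc a
      exact this) hcb
  have hpos : b - a = (b - a - 1) + 1 := by omega
  rw [hpos] at this
  obtain ⟨c, hR⟩ := chain_pos_succ hQ this
  obtain ⟨hc1, hc2, hc3⟩ := hR
  rw [he2] at hc3
  exact edge_fst_ne hc2.1 hc3.symm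

end Feas

end Colors

/-- the color of an edge, given an injection `g` from depot edges to agents
and a default color `k0`. -/
def colE {ι υ : Type*} [Fintype ι] [Fintype υ] (D : MTData ι υ) (Q : MICPPoint ι)
    (g : (Node ι × Node ι) → Fin D.m) (k0 : Fin D.m)
    (e : Node ι × Node ι) : Fin D.m :=
  if h : ∃ a, a ∈ sOutF D Q ∧ Relation.ReflTransGen (Rstep D Q) a e
  then g h.choose else k0

section Col
variable {ι υ : Type*} [Fintype ι] [Fintype υ] {D : MTData ι υ} {Q : MICPPoint ι}
variable (hQ : MICPFeas D Q) {g : (Node ι × Node ι) → Fin D.m} {k0 : Fin D.m}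
variable (hg : ∀ a ∈ sOutF D Q, ∀ b ∈ sOutF D Q, g a = g b → a = b)
include hQ

/-- C2: the color of a used depot edge is its own g-value -/
lemma col_sOut (e : Node ι × Node ι) (he : e ∈ sOutF D Q) :
    colE D Q g k0 e = g e := by
  have hcond : ∃ a, a ∈ sOutF D Q ∧ Relation.ReflTransGen (Rstep D Q) a e :=
    ⟨e, he, Relation.ReflTransGen.refl⟩
  rw [colE, dif_pos hcond]
  congr 1
  exact anc_unique hQ hcond.choose_spec.1 he hcond.choose_spec.2
    Relation.ReflTransGen.refl

/-- C1: color is constant along steps -/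
lemma col_step {e f : Node ι × Node ι} (hR : Rstep D Q e f) :
    colE D Q g k0 e = colE D Q g k0 f := by
  have hiff : ∀ a, (a ∈ sOutF D Q ∧ Relation.ReflTransGen (Rstep D Q) a f) ↔
      (a ∈ sOutF D Q ∧ Relation.ReflTransGen (Rstep D Q) a e) := by
    intro a
    constructor
    · rintro ⟨ha, hra⟩
      refine ⟨ha, ?_⟩
      rcases Relation.ReflTransGen.cases_tail hra with h | ⟨c, hrc, hRc⟩
      · exfalso
        obtain ⟨i, hi, _⟩ := Rstep_snd_inl hR
        rw [h, (mem_sOutF.mp ha).2] at hi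
        simp at hi
      · obtain ⟨i, hi, hci⟩ := Rstep_snd_inl hRc
        obtain ⟨i', hi', hei⟩ := Rstep_snd_inl hR
        rw [hi] at hi'
        have : i = i' := by injection hi'
        subst this
        have : c = e := in_unique hQ hRc.1 hR.1 hci hei
        subst this
        exact hrc
    · rintro ⟨ha, hra⟩
      exact ⟨ha, Relation.ReflTransGen.tail hra hR⟩
  by_cases hcond : ∃ a, a ∈ sOutF D Q ∧ Relation.ReflTransGen (Rstep D Q) a e
  · have hcondf : ∃ a, a ∈ sOutF D Q ∧ Relation.ReflTransGen (Rstep D Q) a f := by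
      obtain ⟨a, ha⟩ := hcond
      exact ⟨a, (hiff a).mpr ha⟩
    rw [colE, colE, dif_pos hcond, dif_pos hcondf]
    congr 1
    have h1 := hcond.choose_spec
    have h2 := (hiff _).mp hcondf.choose_spec
    exact anc_unique hQ h1.1 h2.1 h1.2 h2.2
  · have hcondf : ¬ ∃ a, a ∈ sOutF D Q ∧ Relation.ReflTransGen (Rstep D Q) a f := by
      intro ⟨a, ha⟩
      exact hcond ⟨a, (hiff a).mp ha⟩
    rw [colE, colE, dif_neg hcond, dif_neg hcondf]

include hg in
/-- C3: at most one used edge into s' per color -/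
lemma col_sIn_unique {e1 e2 : Node ι × Node ι}
    (h1 : usedE D Q e1) (h2 : usedE D Q e2)
    (h1' : e1.2 = Sum.inr true) (h2' : e2.2 = Sum.inr true)
    (hc : colE D Q g k0 e1 = colE D Q g k0 e2) : e1 = e2 := by
  obtain ⟨a1, ha1, hr1⟩ := anc_exists hQ h1 h1'
  obtain ⟨a2, ha2, hr2⟩ := anc_exists hQ h2 h2'
  have hcol1 : colE D Q g k0 e1 = g a1 := by
    have hcond : ∃ a, a ∈ sOutF D Q ∧ Relation.ReflTransGen (Rstep D Q) a e1 :=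
      ⟨a1, ha1, hr1⟩
    rw [colE, dif_pos hcond]
    congr 1
    exact anc_unique hQ hcond.choose_spec.1 ha1 hcond.choose_spec.2 hr1
  have hcol2 : colE D Q g k0 e2 = g a2 := by
    have hcond : ∃ a, a ∈ sOutF D Q ∧ Relation.ReflTransGen (Rstep D Q) a e2 :=
      ⟨a2, ha2, hr2⟩
    rw [colE, dif_pos hcond]
    congr 1
    exact anc_unique hQ hcond.choose_spec.1 ha2 hcond.choose_spec.2 hr2
  rw [hcol1, hcol2] at hc
  have : a1 = a2 := hg a1 ha1 a2 ha2 hc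
  subst this
  obtain ⟨n1, hn1⟩ := RTG_toChain hr1
  obtain ⟨n2, hn2⟩ := RTG_toChain hr2
  rcases le_total n1 n2 with h | h
  · have hsub := chain_sub hQ h hn1 hn2
    rcases Nat.eq_zero_or_pos (n2 - n1) with hz | hp
    · rw [hz] at hsub; exact hsub
    · exfalso
      obtain ⟨t, ht⟩ := Nat.exists_eq_add_of_lt hp
      rw [show n2 - n1 = t + 1 by omega] at hsub
      obtain ⟨c, hR⟩ := chain_pos_succ hQ hsub
      obtain ⟨i, hi, hci⟩ := Rstep_snd_inl hR
      rw [h1'] at hci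
      simp at hci
  · have hsub := chain_sub hQ h hn2 hn1
    rcases Nat.eq_zero_or_pos (n1 - n2) with hz | hp
    · rw [hz] at hsub; exact hsub.symm
    · exfalso
      obtain ⟨t, ht⟩ := Nat.exists_eq_add_of_lt hp
      rw [show n1 - n2 = t + 1 by omega] at hsub
      obtain ⟨c, hR⟩ := chain_pos_succ hQ hsub
      obtain ⟨i, hi, hci⟩ := Rstep_snd_inl hR
      rw [h2'] at hci
      simp at hci

end Col
section Build

variable {ι υ : Type*} [Fintype ι] [Fintype υ]

/-- node times for the constructed nonconvex point -/
def buildT (D : MTData ι υ) (Q : MICPPoint ι) (g : (Node ι × Node ι) → Fin D.m)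
    (k0 : Fin D.m) : Node ι → Fin D.m → ℝ
  | Sum.inl i, _ =>
      if h : ∃ e, usedE D Q e ∧ e.1 = Sum.inl i then Q.zt h.choose
      else D.tlo (Sum.inl i)
  | Sum.inr false, k =>
      if h : ∃ e, usedE D Q e ∧ e.1 = Sum.inr false ∧ colE D Q g k0 e = k
      then Q.zt h.choose else D.tlo (Sum.inr false)
  | Sum.inr true, k =>
      if h : ∃ e, usedE D Q e ∧ e.2 = Sum.inr true ∧ colE D Q g k0 e = k
      then Q.zt' h.choose else D.tlo (Sum.inr true)

/-- the constructed nonconvex point -/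
def buildP (D : MTData ι υ) (Q : MICPPoint ι) (g : (Node ι × Node ι) → Fin D.m)
    (k0 : Fin D.m) : NCPoint ι D.m where
  y e k := if usedE D Q e ∧ colE D Q g k0 e = k then 1 else 0
  l e k := if usedE D Q e ∧ colE D Q g k0 e = k then Q.l e else 0
  lxy e k := if usedE D Q e ∧ colE D Q g k0 e = k then Q.lxy e else 0
  zp e k := if usedE D Q e ∧ colE D Q g k0 e = k then Q.zp e else 0
  zt e k := if usedE D Q e ∧ colE D Q g k0 e = k then Q.zt e else 0
  zp' e k := if usedE D Q e ∧ colE D Q g k0 e = k then Q.zp' e else 0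
  zt' e k := if usedE D Q e ∧ colE D Q g k0 e = k then Q.zt' e else 0
  t := buildT D Q g k0
  p i k := D.pos i + (buildT D Q g k0 i k - D.tlo i) • D.vel i

section
variable {D : MTData ι υ} {Q : MICPPoint ι} {g : (Node ι × Node ι) → Fin D.m}
  {k0 : Fin D.m}

lemma buildP_y (e : Node ι × Node ι) (k : Fin D.m) : (buildP D Q g k0).y e k
    = if usedE D Q e ∧ colE D Q g k0 e = k then (1:ℝ) else 0 := rfl
lemma buildP_l (e : Node ι × Node ι) (k : Fin D.m) : (buildP D Q g k0).l e k
    = if usedE D Q e ∧ colE D Q g k0 e = k then Q.l e else 0 := rfl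
lemma buildP_lxy (e : Node ι × Node ι) (k : Fin D.m) : (buildP D Q g k0).lxy e k
    = if usedE D Q e ∧ colE D Q g k0 e = k then Q.lxy e else 0 := rfl
lemma buildP_zp (e : Node ι × Node ι) (k : Fin D.m) : (buildP D Q g k0).zp e k
    = if usedE D Q e ∧ colE D Q g k0 e = k then Q.zp e else 0 := rfl
lemma buildP_zt (e : Node ι × Node ι) (k : Fin D.m) : (buildP D Q g k0).zt e k
    = if usedE D Q e ∧ colE D Q g k0 e = k then Q.zt e else 0 := rfl
lemma buildP_zp' (e : Node ι × Node ι) (k : Fin D.m) : (buildP D Q g k0).zp' e k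
    = if usedE D Q e ∧ colE D Q g k0 e = k then Q.zp' e else 0 := rfl
lemma buildP_zt' (e : Node ι × Node ι) (k : Fin D.m) : (buildP D Q g k0).zt' e k
    = if usedE D Q e ∧ colE D Q g k0 e = k then Q.zt' e else 0 := rfl
lemma buildP_t : (buildP D Q g k0).t = buildT D Q g k0 := rfl
lemma buildP_p (i : Node ι) (k : Fin D.m) : (buildP D Q g k0).p i k
    = D.pos i + (buildT D Q g k0 i k - D.tlo i) • D.vel i := rfl
end

variable {D : MTData ι υ} {Q : MICPPoint ι} {g : (Node ι × Node ι) → Fin D.m}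
  {k0 : Fin D.m}
variable (hQ : MICPFeas D Q)
variable (hg : ∀ a ∈ sOutF D Q, ∀ b ∈ sOutF D Q, g a = g b → a = b)
include hQ

lemma buildT_window (i : Node ι) (k : Fin D.m) :
    D.tlo i ≤ buildT D Q g k0 i k ∧ buildT D Q g k0 i k ≤ D.thi i := by
  have hedge := hQ.2.2.2.2.2.2.2.2.2.2
  rcases i with i | b
  · rw [buildT]
    split
    · next h =>
      obtain ⟨he, h1⟩ := h.choose_spec
      have hb := hedge _ he.1
      rw [he.2, one_mul, one_mul, h1] at hb
      exact ⟨hb.1, hb.2.1⟩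
    · exact ⟨le_refl _, D.tw _⟩
  · rcases b with _ | _
    · rw [buildT]
      split
      · next h =>
        obtain ⟨he, h1, _⟩ := h.choose_spec
        have hb := hedge _ he.1
        rw [he.2, one_mul, one_mul, h1] at hb
        exact ⟨hb.1, hb.2.1⟩
      · exact ⟨le_refl _, D.tw _⟩
    · rw [buildT]
      split
      · next h =>
        obtain ⟨he, h1, _⟩ := h.choose_spec
        have hb := hedge _ he.1
        rw [he.2] at hb
        simp only [one_mul] at hb
        rw [h1] at hb
        exact ⟨hb.2.2.1, hb.2.2.2.1⟩
      · exact ⟨le_refl _, D.tw _⟩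

include hg in
/-- T1 -/
lemma buildT_src {e : Node ι × Node ι} {k : Fin D.m} (he : usedE D Q e)
    (hk : colE D Q g k0 e = k) : buildT D Q g k0 e.1 k = Q.zt e := by
  rcases edge_fst_cases he.1 with ⟨i, hi⟩ | hi
  · rw [hi, buildT]
    have hcond : ∃ f, usedE D Q f ∧ f.1 = Sum.inl i := ⟨e, he, hi⟩
    rw [dif_pos hcond]
    congr 1
    exact out_unique hQ hcond.choose_spec.1 he hcond.choose_spec.2 hi
  · rw [hi, buildT]
    have hcond : ∃ f, usedE D Q f ∧ f.1 = Sum.inr false ∧ colE D Q g k0 f = k :=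
      ⟨e, he, hi, hk⟩
    rw [dif_pos hcond]
    congr 1
    obtain ⟨hf, hf1, hfk⟩ := hcond.choose_spec
    have hmem : hcond.choose ∈ sOutF D Q := mem_sOutF.mpr ⟨hf, hf1⟩
    have hmem' : e ∈ sOutF D Q := mem_sOutF.mpr ⟨he, hi⟩
    apply hg _ hmem _ hmem'
    rw [← col_sOut (g := g) (k0 := k0) hQ _ hmem, ← col_sOut (g := g) (k0 := k0) hQ _ hmem', hfk, hk]

include hg in
/-- T2 -/
lemma buildT_tgt {e : Node ι × Node ι} {k : Fin D.m} (he : usedE D Q e)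
    (hk : colE D Q g k0 e = k) : buildT D Q g k0 e.2 k = Q.zt' e := by
  rcases edge_snd_cases he.1 with ⟨j, hj⟩ | hj
  · rw [hj, buildT]
    have hcond : ∃ f, usedE D Q f ∧ f.1 = Sum.inl j := out_exists hQ he hj
    rw [dif_pos hcond]
    obtain ⟨hf, hf1⟩ := hcond.choose_spec
    exact (zt_link hQ he hf hj hf1).symm
  · rw [hj, buildT]
    have hcond : ∃ f, usedE D Q f ∧ f.2 = Sum.inr true ∧ colE D Q g k0 f = k :=
      ⟨e, he, hj, hk⟩
    rw [dif_pos hcond]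
    congr 1
    obtain ⟨hf, hf2, hfk⟩ := hcond.choose_spec
    exact col_sIn_unique hQ hg hf he hf2 hj (by rw [hfk, hk])

include hg in
lemma buildP_feas : NCFeas D (buildP D Q g k0) ∧
    NCObj D (buildP D Q g k0) = MICPObj D Q := by
  set P := buildP D Q g k0 with hP
  have hy01 : ∀ e ∈ edges D, ∀ k, P.y e k = 0 ∨ P.y e k = 1 := by
    intro e _ k
    rw [hP, buildP_y]
    split
    · exact Or.inr rfl
    · exact Or.inl rfl
  have hy1 : ∀ {e k}, P.y e k = 1 ↔ (usedE D Q e ∧ colE D Q g k0 e = k) := by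
    intro e k
    rw [hP, buildP_y]
    split
    · next h => simp [h]
    · next h => simp [h]
  have hsumk : ∀ e ∈ edges D, ∑ k, P.y e k = Q.y e := by
    intro e he
    by_cases hu : usedE D Q e
    · rw [hu.2]
      simp only [hP, buildP_y]
      simp [hu]
    · rw [y_unused hQ he hu]
      apply Finset.sum_eq_zero
      intro k _
      simp only [hP, buildP_y]
      simp [hu]
  constructor
  · refine ⟨hy01, ?_, ?_, ?_, ?_, ?_, ?_, ?_, ?_⟩
    · -- l ≥ 0
      intro e he k
      rw [hP, buildP_l]
      split
      · next h => exact hQ.2.1 e he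
      · exact le_refl _
    · -- out of s per agent
      intro k
      apply sum01_le_one (fun e he => hy01 e (Finset.mem_filter.mp he).1 k)
      intro e he e' he' h1 h1'
      obtain ⟨hu, hc⟩ := hy1.mp h1
      obtain ⟨hu', hc'⟩ := hy1.mp h1'
      have hm : e ∈ sOutF D Q := mem_sOutF.mpr ⟨hu, (mem_outE.mp he).2⟩
      have hm' : e' ∈ sOutF D Q := mem_sOutF.mpr ⟨hu', (mem_outE.mp he').2⟩
      apply hg _ hm _ hm'
      rw [← col_sOut (g := g) (k0 := k0) hQ _ hm, ← col_sOut (g := g) (k0 := k0) hQ _ hm', hc, hc']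
    · -- into s' per agent
      intro k
      apply sum01_le_one (fun e he => hy01 e (Finset.mem_filter.mp he).1 k)
      intro e he e' he' h1 h1'
      obtain ⟨hu, hc⟩ := hy1.mp h1
      obtain ⟨hu', hc'⟩ := hy1.mp h1'
      exact col_sIn_unique hQ hg hu hu' (mem_inE.mp he).2 (mem_inE.mp he').2
        (by rw [hc, hc'])
    · -- cluster constraint
      intro u
      have hclu := hQ.2.2.2.2.2.2.2.1 u
      rw [← hclu]
      rw [Finset.sum_comm]
      apply Finset.sum_congr rfl
      intro i _
      rw [Finset.sum_comm]
      apply Finset.sum_congr rfl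
      intro e he
      exact hsumk e (Finset.mem_filter.mp he).1
    · -- conservation per node per agent
      intro i k
      by_cases hin : ∃ e, usedE D Q e ∧ e.2 = Sum.inl i ∧ colE D Q g k0 e = k
      · obtain ⟨e, hu, he2, hc⟩ := hin
        obtain ⟨f, hf, hf1⟩ := out_exists hQ hu he2
        have hcf : colE D Q g k0 f = k := by
          rw [← hc]
          exact (col_step hQ ⟨hu, hf, by rw [he2, hf1]⟩).symm
        have hL : ∑ e' ∈ inE D (Sum.inl i), P.y e' k = 1 := by
          rw [Finset.sum_eq_single_of_mem e (mem_inE.mpr ⟨hu.1, he2⟩)]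
          · exact hy1.mpr ⟨hu, hc⟩
          · intro b hb hbne
            rcases hy01 b (mem_inE.mp hb).1 k with h | h
            · exact h
            · obtain ⟨hub, _⟩ := hy1.mp h
              exact absurd (in_unique hQ hub hu (mem_inE.mp hb).2 he2) hbne
        have hR : ∑ e' ∈ outE D (Sum.inl i), P.y e' k = 1 := by
          rw [Finset.sum_eq_single_of_mem f (mem_outE.mpr ⟨hf.1, hf1⟩)]
          · exact hy1.mpr ⟨hf, hcf⟩
          · intro b hb hbne
            rcases hy01 b (mem_outE.mp hb).1 k with h | h
            · exact h
            · obtain ⟨hub, _⟩ := hy1.mp h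
              exact absurd (out_unique hQ hub hf (mem_outE.mp hb).2 hf1) hbne
        rw [hL, hR]
      · push_neg at hin
        have hL : ∑ e' ∈ inE D (Sum.inl i), P.y e' k = 0 := by
          apply Finset.sum_eq_zero
          intro b hb
          rcases hy01 b (mem_inE.mp hb).1 k with h | h
          · exact h
          · obtain ⟨hub, hcb⟩ := hy1.mp h
            exact absurd hcb (hin b hub (mem_inE.mp hb).2)
        have hR : ∑ e' ∈ outE D (Sum.inl i), P.y e' k = 0 := by
          apply Finset.sum_eq_zero
          intro b hb
          rcases hy01 b (mem_outE.mp hb).1 k with h | h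
          · exact h
          · obtain ⟨hub, hcb⟩ := hy1.mp h
            obtain ⟨f, hf, hf2⟩ := in_exists hQ hub (mem_outE.mp hb).2
            have : colE D Q g k0 f = k := by
              rw [← hcb]
              exact col_step hQ ⟨hf, hub, by rw [hf2, (mem_outE.mp hb).2]⟩
            exact absurd this (hin f hf hf2)
        rw [hL, hR]
    · -- time windows
      exact fun i k => buildT_window hQ i k
    · -- position formula
      intro i k
      rfl
    · -- edge constraints
      intro e he k
      have hedge := hQ.2.2.2.2.2.2.2.2.2.2 e he
      by_cases hc : usedE D Q e ∧ colE D Q g k0 e = k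
      · have ht1 : P.t e.1 k = Q.zt e := buildT_src hQ hg hc.1 hc.2
        have ht2 : P.t e.2 k = Q.zt' e := buildT_tgt hQ hg hc.1 hc.2
        have hy : P.y e k = 1 := hy1.mpr hc
        have hzp : P.zp e k = Q.zp e := by rw [hP, buildP_zp]; exact if_pos hc
        have hzt : P.zt e k = Q.zt e := by rw [hP, buildP_zt]; exact if_pos hc
        have hzp' : P.zp' e k = Q.zp' e := by rw [hP, buildP_zp']; exact if_pos hc
        have hzt' : P.zt' e k = Q.zt' e := by rw [hP, buildP_zt']; exact if_pos hc
        have hl : P.l e k = Q.l e := by rw [hP, buildP_l]; exact if_pos hc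
        have hlxy : P.lxy e k = Q.lxy e := by rw [hP, buildP_lxy]; exact if_pos hc
        have hp1 : P.p e.1 k = D.pos e.1 + (Q.zt e - D.tlo e.1) • D.vel e.1 := by
          show D.pos e.1 + (buildT D Q g k0 e.1 k - D.tlo e.1) • D.vel e.1 = _
          rw [show buildT D Q g k0 e.1 k = P.t e.1 k from rfl, ht1]
        have hp2 : P.p e.2 k = D.pos e.2 + (Q.zt' e - D.tlo e.2) • D.vel e.2 := by
          show D.pos e.2 + (buildT D Q g k0 e.2 k - D.tlo e.2) • D.vel e.2 = _
          rw [show buildT D Q g k0 e.2 k = P.t e.2 k from rfl, ht2]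
        refine ⟨?_, ?_, ?_, ?_, ?_, ?_, ?_⟩
        · rw [hzp, hy, hp1, one_smul, hedge.2.2.2.2.1, hc.1.2, one_smul]
          module
        · rw [hzt, hy, one_mul, ht1]
        · rw [hzp', hy, hp2, one_smul, hedge.2.2.2.2.2.1, hc.1.2, one_smul]
          module
        · rw [hzt', hy, one_mul, ht2]
        · rw [hl, hzt, hzt']; exact hedge.2.2.2.2.2.2.1
        · rw [hlxy, hzp, hzp']; exact hedge.2.2.2.2.2.2.2.1
        · rw [hlxy, hl]; exact hedge.2.2.2.2.2.2.2.2
      · have hy : P.y e k = 0 := by rw [hP]; exact if_neg hc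
        have hzp : P.zp e k = 0 := by rw [hP, buildP_zp]; exact if_neg hc
        have hzt : P.zt e k = 0 := by rw [hP, buildP_zt]; exact if_neg hc
        have hzp' : P.zp' e k = 0 := by rw [hP, buildP_zp']; exact if_neg hc
        have hzt' : P.zt' e k = 0 := by rw [hP, buildP_zt']; exact if_neg hc
        have hl : P.l e k = 0 := by rw [hP, buildP_l]; exact if_neg hc
        have hlxy : P.lxy e k = 0 := by rw [hP, buildP_lxy]; exact if_neg hc
        refine ⟨?_, ?_, ?_, ?_, ?_, ?_, ?_⟩
        · rw [hzp, hy, zero_smul]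
        · rw [hzt, hy, zero_mul]
        · rw [hzp', hy, zero_smul]
        · rw [hzt', hy, zero_mul]
        · rw [hl, hzt, hzt']; simp
        · rw [hlxy, hzp, hzp', sub_zero]
        · rw [hlxy, hl]; simp
  · -- objective
    rw [NCObj, MICPObj, Finset.sum_comm]
    apply Finset.sum_congr rfl
    intro e he
    by_cases hu : usedE D Q e
    · rw [Finset.sum_eq_single_of_mem (colE D Q g k0 e) (Finset.mem_univ _)]
      · rw [hP, buildP_l]; exact if_pos ⟨hu, rfl⟩
      · intro k _ hk
        rw [hP, buildP_l]
        exact if_neg (fun hcc => hk hcc.2.symm)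
    · have : Q.l e = 0 := (zt_unused hQ he hu).2.2
      rw [this]
      apply Finset.sum_eq_zero
      intro k _
      rw [hP, buildP_l]
      exact if_neg (fun hcc => hu hcc.1)

end Build
section Agg

variable {ι υ : Type*} [Fintype ι] [Fintype υ]

lemma inE_s_empty (D : MTData ι υ) : inE D (Sum.inr false) = ∅ := by
  apply Finset.eq_empty_of_forall_notMem
  intro e he
  obtain ⟨h1, h2⟩ := mem_inE.mp he
  exact edge_snd_ne h1 h2

lemma outE_s'_empty (D : MTData ι υ) : outE D (Sum.inr true) = ∅ := by
  apply Finset.eq_empty_of_forall_notMem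
  intro e he
  obtain ⟨h1, h2⟩ := mem_outE.mp he
  exact edge_fst_ne h1 h2

lemma sum_edges_in (D : MTData ι υ) (f : Node ι × Node ι → ℝ) :
    ∑ e ∈ edges D, f e = ∑ i : Node ι, ∑ e ∈ inE D i, f e :=
  (Finset.sum_fiberwise (edges D) (fun e => e.2) f).symm

lemma sum_edges_out (D : MTData ι υ) (f : Node ι × Node ι → ℝ) :
    ∑ e ∈ edges D, f e = ∑ i : Node ι, ∑ e ∈ outE D i, f e :=
  (Finset.sum_fiberwise (edges D) (fun e => e.1) f).symm

variable {D : MTData ι υ} {P : NCPoint ι D.m}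
variable (hP : NCFeas D P)
include hP

lemma ny_nonneg {e : Node ι × Node ι} (he : e ∈ edges D) (k : Fin D.m) :
    0 ≤ P.y e k := by
  rcases hP.1 e he k with h | h <;> rw [h] <;> norm_num

/-- flow balance between the two depots, per agent -/
lemma in_s'_eq_out_s (k : Fin D.m) :
    ∑ e ∈ inE D (Sum.inr true), P.y e k = ∑ e ∈ outE D (Sum.inr false), P.y e k := by
  have h1 := sum_edges_in D (fun e => P.y e k)
  have h2 := sum_edges_out D (fun e => P.y e k)
  rw [h2] at h1
  rw [Fintype.sum_sum_type, Fintype.sum_sum_type] at h1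
  simp only [Fintype.sum_bool] at h1
  have hcons := hP.2.2.2.2.2.1
  have hc : ∑ i : ι, ∑ e ∈ inE D (Sum.inl i), P.y e k
      = ∑ i : ι, ∑ e ∈ outE D (Sum.inl i), P.y e k :=
    Finset.sum_congr rfl (fun i _ => hcons i k)
  rw [inE_s_empty, outE_s'_empty] at h1
  simp only [Finset.sum_empty] at h1
  linarith

/-- the total flow on an edge into segment node `j` is at most 1 -/
lemma yk_le_cluster {e : Node ι × Node ι} (he : e ∈ edges D) {j : ι}
    (hj : e.2 = Sum.inl j) (k : Fin D.m) :
    P.y e k ≤ ∑ i ∈ Finset.univ.filter (fun i => D.cl i = D.cl j),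
      ∑ e' ∈ inE D (Sum.inl i), P.y e' k := by
  calc P.y e k ≤ ∑ e' ∈ inE D (Sum.inl j), P.y e' k := by
        apply Finset.single_le_sum (f := fun e' => P.y e' k)
          (fun x hx => ny_nonneg hP (Finset.mem_filter.mp hx).1 k)
          (mem_inE.mpr ⟨he, hj⟩)
    _ ≤ _ := by
        apply Finset.single_le_sum
          (f := fun i => ∑ e' ∈ inE D (Sum.inl i), P.y e' k)
        · intro x _
          exact Finset.sum_nonneg (fun e' he' =>
            ny_nonneg hP (Finset.mem_filter.mp he').1 k)
        · simp

lemma y_sum_le_one {e : Node ι × Node ι} (he : e ∈ edges D) :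
    ∑ k, P.y e k ≤ 1 := by
  have hclu := hP.2.2.2.2.1
  rcases edge_snd_cases he with ⟨j, hj⟩ | hj
  · calc ∑ k, P.y e k
        ≤ ∑ k, ∑ i ∈ Finset.univ.filter (fun i => D.cl i = D.cl j),
            ∑ e' ∈ inE D (Sum.inl i), P.y e' k :=
          Finset.sum_le_sum (fun k _ => yk_le_cluster hP he hj k)
      _ = 1 := hclu (D.cl j)
  · -- edge into s' : use conservation at its segment source
    have h1 : ∃ i, e.1 = Sum.inl i := by
      rcases edge_fst_cases he with h | h
      · exact h
      · obtain ⟨j, hj2⟩ := edge_snd_of_fst_s he h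
        rw [hj] at hj2
        simp at hj2
    obtain ⟨i, hi⟩ := h1
    have hcons := hP.2.2.2.2.2.1
    have hstep : ∀ k, P.y e k ≤ ∑ i' ∈ Finset.univ.filter (fun i' => D.cl i' = D.cl i),
        ∑ e' ∈ inE D (Sum.inl i'), P.y e' k := by
      intro k
      calc P.y e k ≤ ∑ e' ∈ outE D (Sum.inl i), P.y e' k := by
            apply Finset.single_le_sum (f := fun e' => P.y e' k)
              (fun x hx => ny_nonneg hP (Finset.mem_filter.mp hx).1 k)
              (mem_outE.mpr ⟨he, hi⟩)
        _ = ∑ e' ∈ inE D (Sum.inl i), P.y e' k := (hcons i k).symm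
        _ ≤ _ := by
            apply Finset.single_le_sum
              (f := fun i' => ∑ e' ∈ inE D (Sum.inl i'), P.y e' k)
            · intro x _
              exact Finset.sum_nonneg (fun e' he' =>
                ny_nonneg hP (Finset.mem_filter.mp he').1 k)
            · simp
    calc ∑ k, P.y e k ≤ _ := Finset.sum_le_sum (fun k _ => hstep k)
      _ = 1 := hclu (D.cl i)

lemma nz_unused {e : Node ι × Node ι} (he : e ∈ edges D) {k : Fin D.m}
    (hy : P.y e k = 0) : P.zt e k = 0 ∧ P.zt' e k = 0 ∧ P.l e k = 0 := by
  obtain ⟨-, h2, -, h4, h5, -, -⟩ := hP.2.2.2.2.2.2.2.2 e he k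
  rw [hy, zero_mul] at h2 h4
  refine ⟨h2, h4, le_antisymm ?_ (hP.2.1 e he k)⟩
  rw [h2, h4] at h5
  simpa using h5

end Agg

/-- the aggregated MICP point -/
def aggQ {ι υ : Type*} [Fintype ι] [Fintype υ] (D : MTData ι υ)
    (P : NCPoint ι D.m) : MICPPoint ι where
  y e := ∑ k, P.y e k
  l e := ∑ k, P.l e k
  lxy e := ∑ k, P.lxy e k
  zp e := ∑ k, P.zp e k
  zt e := ∑ k, P.zt e k
  zp' e := ∑ k, P.zp' e k
  zt' e := ∑ k, P.zt' e k
  α := ∑ e ∈ outE D (Sum.inr false), ∑ k, P.y e k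
section Agg2

variable {ι υ : Type*} [Fintype ι] [Fintype υ]
variable {D : MTData ι υ} {P : NCPoint ι D.m}
variable (hP : NCFeas D P)
include hP

lemma agg_y01 {e : Node ι × Node ι} (he : e ∈ edges D) :
    (∑ k, P.y e k) = 0 ∨ (∑ k, P.y e k) = 1 := by
  by_cases h : ∀ k, P.y e k = 0
  · exact Or.inl (Finset.sum_eq_zero (fun k _ => h k))
  · push_neg at h
    obtain ⟨k1, hk1⟩ := h
    have h1 : P.y e k1 = 1 := (hP.1 e he k1).resolve_left hk1
    right
    refine le_antisymm (y_sum_le_one hP he) ?_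
    calc (1:ℝ) = P.y e k1 := h1.symm
      _ ≤ ∑ k, P.y e k :=
        Finset.single_le_sum (fun k _ => ny_nonneg hP he k) (Finset.mem_univ k1)

lemma agg_feas (hpos : 0 < ∑ e ∈ outE D (Sum.inr false), ∑ k, P.y e k) :
    MICPFeas D (aggQ D P) := by
  obtain ⟨h01, hl, houts, hins, hclu, hcons, htw, hpp, hedge⟩ := hP
  have hPfull : NCFeas D P := ⟨h01, hl, houts, hins, hclu, hcons, htw, hpp, hedge⟩
  refine ⟨?_, ?_, ?_, ?_, ?_, ?_, ?_, ?_, ?_, ?_, ?_⟩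
  · exact fun e he => agg_y01 hPfull he
  · intro e he
    show (0:ℝ) ≤ ∑ k, P.l e k
    exact Finset.sum_nonneg (fun k _ => hl e he k)
  · -- integrality of α
    refine ⟨((outE D (Sum.inr false)).filter
      (fun e => (∑ k, P.y e k) = 1)).card, ?_⟩
    show ∑ e ∈ outE D (Sum.inr false), ∑ k, P.y e k = _
    have hcg : ∀ e ∈ outE D (Sum.inr false),
        (∑ k, P.y e k) = (if (∑ k, P.y e k) = 1 then (1:ℝ) else 0) := by
      intro e he
      rcases agg_y01 hPfull (Finset.mem_filter.mp he).1 with h | h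
      · rw [h]; norm_num
      · rw [h]; norm_num
    rw [Finset.sum_congr rfl hcg, Finset.sum_boole]
    push_cast
    ring
  · -- 1 ≤ α
    have h1 : ∃ e ∈ outE D (Sum.inr false), (∑ k, P.y e k) ≠ 0 :=
      Finset.exists_ne_zero_of_sum_ne_zero (by positivity)
    obtain ⟨e, he, hne⟩ := h1
    have h2 : (∑ k, P.y e k) = 1 :=
      (agg_y01 hPfull (Finset.mem_filter.mp he).1).resolve_left hne
    show (1:ℝ) ≤ ∑ e ∈ outE D (Sum.inr false), ∑ k, P.y e k
    calc (1:ℝ) = ∑ k, P.y e k := h2.symm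
      _ ≤ _ := Finset.single_le_sum (f := fun e => ∑ k, P.y e k)
          (fun x hx => Finset.sum_nonneg
            (fun k _ => ny_nonneg hPfull (Finset.mem_filter.mp hx).1 k)) he
  · -- α ≤ m
    show ∑ e ∈ outE D (Sum.inr false), ∑ k, P.y e k ≤ (D.m : ℝ)
    calc ∑ e ∈ outE D (Sum.inr false), ∑ k, P.y e k
        = ∑ k : Fin D.m, ∑ e ∈ outE D (Sum.inr false), P.y e k := Finset.sum_comm
      _ ≤ ∑ _k : Fin D.m, (1:ℝ) := Finset.sum_le_sum (fun k _ => houts k)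
      _ = (D.m : ℝ) := by simp
  · rfl
  · -- in-flow at s' equals α
    show ∑ e ∈ inE D (Sum.inr true), ∑ k, P.y e k
        = ∑ e ∈ outE D (Sum.inr false), ∑ k, P.y e k
    calc ∑ e ∈ inE D (Sum.inr true), ∑ k, P.y e k
        = ∑ k, ∑ e ∈ inE D (Sum.inr true), P.y e k := Finset.sum_comm
      _ = ∑ k, ∑ e ∈ outE D (Sum.inr false), P.y e k :=
          Finset.sum_congr rfl (fun k _ => in_s'_eq_out_s hPfull k)
      _ = _ := Finset.sum_comm
  · -- cluster constraint
    intro u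
    show ∑ i ∈ Finset.univ.filter (fun i => D.cl i = u),
        ∑ e ∈ inE D (Sum.inl i), ∑ k, P.y e k = 1
    rw [← hclu u]
    exact (Finset.sum_comm.trans
      (Finset.sum_congr rfl (fun i _ => Finset.sum_comm))).symm
  · -- conservation
    intro i
    show ∑ e ∈ inE D (Sum.inl i), ∑ k, P.y e k
        = ∑ e ∈ outE D (Sum.inl i), ∑ k, P.y e k
    calc ∑ e ∈ inE D (Sum.inl i), ∑ k, P.y e k
        = ∑ k, ∑ e ∈ inE D (Sum.inl i), P.y e k := Finset.sum_comm
      _ = ∑ k, ∑ e ∈ outE D (Sum.inl i), P.y e k :=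
          Finset.sum_congr rfl (fun k _ => hcons i k)
      _ = _ := Finset.sum_comm
  · -- time conservation
    intro i
    show ∑ e ∈ inE D (Sum.inl i), ∑ k, P.zt' e k
        = ∑ e ∈ outE D (Sum.inl i), ∑ k, P.zt e k
    refine (Finset.sum_comm.trans ?_).trans Finset.sum_comm
    apply Finset.sum_congr rfl
    intro k _
    have hL : ∑ e ∈ inE D (Sum.inl i), P.zt' e k
        = P.t (Sum.inl i) k * ∑ e ∈ inE D (Sum.inl i), P.y e k := by
      rw [Finset.mul_sum]
      apply Finset.sum_congr rfl
      intro e he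
      obtain ⟨hee, he2⟩ := mem_inE.mp he
      have := (hedge e hee k).2.2.2.1
      rw [this, he2]
      ring
    have hR : ∑ e ∈ outE D (Sum.inl i), P.zt e k
        = P.t (Sum.inl i) k * ∑ e ∈ outE D (Sum.inl i), P.y e k := by
      rw [Finset.mul_sum]
      apply Finset.sum_congr rfl
      intro e he
      obtain ⟨hee, he1⟩ := mem_outE.mp he
      have := (hedge e hee k).2.1
      rw [this, he1]
      ring
    rw [hL, hR, hcons i k]
  · -- per-edge constraints
    intro e he
    have hek := fun k => hedge e he k
    have htlo : ∀ (v : Node ι) k, P.y e k * D.tlo v ≤ P.y e k * P.t v k :=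
      fun v k => mul_le_mul_of_nonneg_left (htw v k).1 (ny_nonneg hPfull he k)
    have hthi : ∀ (v : Node ι) k, P.y e k * P.t v k ≤ P.y e k * D.thi v :=
      fun v k => mul_le_mul_of_nonneg_left (htw v k).2 (ny_nonneg hPfull he k)
    refine ⟨?_, ?_, ?_, ?_, ?_, ?_, ?_, ?_, ?_⟩
    · show (∑ k, P.y e k) * D.tlo e.1 ≤ ∑ k, P.zt e k
      rw [Finset.sum_mul]
      apply Finset.sum_le_sum
      intro k _
      rw [(hek k).2.1]
      exact htlo e.1 k
    · show (∑ k, P.zt e k) ≤ (∑ k, P.y e k) * D.thi e.1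
      rw [Finset.sum_mul]
      apply Finset.sum_le_sum
      intro k _
      rw [(hek k).2.1]
      exact hthi e.1 k
    · show (∑ k, P.y e k) * D.tlo e.2 ≤ ∑ k, P.zt' e k
      rw [Finset.sum_mul]
      apply Finset.sum_le_sum
      intro k _
      rw [(hek k).2.2.2.1]
      exact htlo e.2 k
    · show (∑ k, P.zt' e k) ≤ (∑ k, P.y e k) * D.thi e.2
      rw [Finset.sum_mul]
      apply Finset.sum_le_sum
      intro k _
      rw [(hek k).2.2.2.1]
      exact hthi e.2 k
    · -- zp formula
      show (∑ k, P.zp e k) = (∑ k, P.zt e k) • D.vel e.1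
          + (∑ k, P.y e k) • (D.pos e.1 - D.tlo e.1 • D.vel e.1)
      rw [Finset.sum_smul, Finset.sum_smul, ← Finset.sum_add_distrib]
      apply Finset.sum_congr rfl
      intro k _
      rw [(hek k).1, (hek k).2.1, hpp e.1 k]
      module
    · show (∑ k, P.zp' e k) = (∑ k, P.zt' e k) • D.vel e.2
          + (∑ k, P.y e k) • (D.pos e.2 - D.tlo e.2 • D.vel e.2)
      rw [Finset.sum_smul, Finset.sum_smul, ← Finset.sum_add_distrib]
      apply Finset.sum_congr rfl
      intro k _
      rw [(hek k).2.2.1, (hek k).2.2.2.1, hpp e.2 k]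
      module
    · show (∑ k, P.l e k) ≤ D.vmax * ((∑ k, P.zt' e k) - ∑ k, P.zt e k)
      rw [← Finset.sum_sub_distrib, Finset.mul_sum]
      exact Finset.sum_le_sum (fun k _ => (hek k).2.2.2.2.1)
    · show (∑ k, P.lxy e k) = (∑ k, P.zp' e k) - ∑ k, P.zp e k
      rw [← Finset.sum_sub_distrib]
      exact Finset.sum_congr rfl (fun k _ => (hek k).2.2.2.2.2.1)
    · -- norm constraint
      show ‖∑ k, P.lxy e k‖ ^ 2 ≤ (∑ k, P.l e k) ^ 2
      have h1 : ‖∑ k, P.lxy e k‖ ≤ ∑ k, P.l e k := by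
        calc ‖∑ k, P.lxy e k‖ ≤ ∑ k, ‖P.lxy e k‖ := norm_sum_le _ _
          _ ≤ ∑ k, P.l e k := by
            apply Finset.sum_le_sum
            intro k _
            have h2 := (hek k).2.2.2.2.2.2
            have h3 := hl e he k
            nlinarith [norm_nonneg (P.lxy e k)]
      exact pow_le_pow_left₀ (norm_nonneg _) h1 2

/-- when no agent leaves the depot, the objective is zero -/
lemma obj_zero (hzero : ∑ e ∈ outE D (Sum.inr false), ∑ k, P.y e k = 0) :
    NCObj D P = 0 := by
  obtain ⟨h01, hl, houts, hins, hclu, hcons, htw, hpp, hedge⟩ := hP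
  have hPfull : NCFeas D P := ⟨h01, hl, houts, hins, hclu, hcons, htw, hpp, hedge⟩
  have hek : ∀ k, ∀ e ∈ outE D (Sum.inr false), P.y e k = 0 := by
    intro k e he
    have hnn : ∀ e' ∈ outE D (Sum.inr false), 0 ≤ ∑ k, P.y e' k :=
      fun e' he' => Finset.sum_nonneg
        (fun k' _ => ny_nonneg hPfull (Finset.mem_filter.mp he').1 k')
    have h1 : ∑ k, P.y e k = 0 :=
      (Finset.sum_eq_zero_iff_of_nonneg hnn).mp hzero e he
    exact (Finset.sum_eq_zero_iff_of_nonneg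
      (fun k' _ => ny_nonneg hPfull (Finset.mem_filter.mp he).1 k')).mp h1 k
      (Finset.mem_univ k)
  rw [NCObj]
  apply Finset.sum_eq_zero
  intro k _
  have hdiff : ∑ e ∈ edges D, (P.zt' e k - P.zt e k) = 0 := by
    rw [Finset.sum_sub_distrib]
    have hin : ∑ e ∈ edges D, P.zt' e k = ∑ i : Node ι, ∑ e ∈ inE D i, P.zt' e k :=
      sum_edges_in D _
    have hout : ∑ e ∈ edges D, P.zt e k = ∑ i : Node ι, ∑ e ∈ outE D i, P.zt e k :=
      sum_edges_out D _
    rw [hin, hout]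
    have hterm : ∀ i : Node ι, ∑ e ∈ inE D i, P.zt' e k
        = P.t i k * ∑ e ∈ inE D i, P.y e k := by
      intro i
      rw [Finset.mul_sum]
      apply Finset.sum_congr rfl
      intro e he
      obtain ⟨hee, he2⟩ := mem_inE.mp he
      rw [(hedge e hee k).2.2.2.1, he2]
      ring
    have hterm' : ∀ i : Node ι, ∑ e ∈ outE D i, P.zt e k
        = P.t i k * ∑ e ∈ outE D i, P.y e k := by
      intro i
      rw [Finset.mul_sum]
      apply Finset.sum_congr rfl
      intro e he
      obtain ⟨hee, he1⟩ := mem_outE.mp he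
      rw [(hedge e hee k).2.1, he1]
      ring
    rw [Finset.sum_congr rfl (fun i _ => hterm i),
      Finset.sum_congr rfl (fun i _ => hterm' i)]
    have hsout : ∑ e ∈ outE D (Sum.inr false), P.y e k = 0 :=
      Finset.sum_eq_zero (fun e he => hek k e he)
    have hsin : ∑ e ∈ inE D (Sum.inr true), P.y e k = 0 := by
      rw [in_s'_eq_out_s hPfull k, hsout]
    rw [Fintype.sum_sum_type, Fintype.sum_sum_type]
    simp only [Fintype.sum_bool]
    rw [inE_s_empty, outE_s'_empty]
    simp only [Finset.sum_empty, mul_zero]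
    rw [hsout, hsin]
    simp only [mul_zero]
    have hcg : ∀ i ∈ (Finset.univ : Finset ι),
        P.t (Sum.inl i) k * ∑ e ∈ inE D (Sum.inl i), P.y e k
        = P.t (Sum.inl i) k * ∑ e ∈ outE D (Sum.inl i), P.y e k :=
      fun i _ => by rw [hcons i k]
    rw [Finset.sum_congr rfl hcg]
    ring
  have hle : ∑ e ∈ edges D, P.l e k ≤ 0 := by
    calc ∑ e ∈ edges D, P.l e k
        ≤ ∑ e ∈ edges D, D.vmax * (P.zt' e k - P.zt e k) :=
          Finset.sum_le_sum (fun e he => (hedge e he k).2.2.2.2.1)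
      _ = D.vmax * ∑ e ∈ edges D, (P.zt' e k - P.zt e k) := by rw [Finset.mul_sum]
      _ = 0 := by rw [hdiff, mul_zero]
  exact le_antisymm hle (Finset.sum_nonneg (fun e he => hl e he k))

end Agg2
/-- For every feasible point of the MICP formulation there is a
feasible point of the nonconvex formulation with the same objective value.
Consequently, the optimal value of the nonconvex formulation is at most the optimal
value of the MICP formulation. -/
theorem nonconvex_feasible_of_micp_feasible
    {ι υ : Type*} [Fintype ι] [Fintype υ] (D : MTData ι υ) :
    (∀ Q : MICPPoint ι, MICPFeas D Q →
      ∃ P : NCPoint ι D.m, NCFeas D P ∧ NCObj D P = MICPObj D Q) ∧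
    sInf {c : ℝ | ∃ P : NCPoint ι D.m, NCFeas D P ∧ NCObj D P = c} ≤
      sInf {c : ℝ | ∃ Q : MICPPoint ι, MICPFeas D Q ∧ MICPObj D Q = c} := by

  have part1 : ∀ Q : MICPPoint ι, MICPFeas D Q →
      ∃ P : NCPoint ι D.m, NCFeas D P ∧ NCObj D P = MICPObj D Q := by
    intro Q hQ
    -- the number of used depot edges is at most the number of agents
    have hcard : (sOutF D Q).card ≤ D.m := by
      have h1 : ((sOutF D Q).card : ℝ) ≤ ∑ e ∈ outE D (Sum.inr false), Q.y e := by
        calc ((sOutF D Q).card : ℝ) = ∑ _e ∈ sOutF D Q, (1:ℝ) := by simp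
          _ = ∑ e ∈ sOutF D Q, Q.y e :=
            Finset.sum_congr rfl (fun e he => ((Finset.mem_filter.mp he).2).symm)
          _ ≤ ∑ e ∈ outE D (Sum.inr false), Q.y e :=
            Finset.sum_le_sum_of_subset_of_nonneg (Finset.filter_subset _ _)
              (fun e he _ => y_nonneg hQ (Finset.mem_filter.mp he).1)
      have h2 : ∑ e ∈ outE D (Sum.inr false), Q.y e = Q.α := hQ.2.2.2.2.2.1
      have h3 : Q.α ≤ (D.m : ℝ) := hQ.2.2.2.2.1
      have : ((sOutF D Q).card : ℝ) ≤ (D.m : ℝ) := by linarith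
      exact_mod_cast this
    obtain ⟨emb⟩ : Nonempty ((sOutF D Q : Finset (Node ι × Node ι)) ↪ Fin D.m) := by
      apply Function.Embedding.nonempty_of_card_le
      simpa [Fintype.card_coe] using hcard
    have hk0 : 0 < D.m := D.m_pos
    set k0 : Fin D.m := ⟨0, hk0⟩ with hk0def
    set g : (Node ι × Node ι) → Fin D.m :=
      fun e => if h : e ∈ sOutF D Q then emb ⟨e, h⟩ else k0 with hgdef
    have hg : ∀ a ∈ sOutF D Q, ∀ b ∈ sOutF D Q, g a = g b → a = b := by
      intro a ha b hb hab
      rw [hgdef] at hab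
      simp only [dif_pos ha, dif_pos hb] at hab
      have := emb.injective hab
      exact congrArg Subtype.val this
    obtain ⟨hfeas, hobj⟩ := buildP_feas hQ hg (k0 := k0)
    exact ⟨buildP D Q g k0, hfeas, hobj⟩
  refine ⟨part1, ?_⟩
  set A := {c : ℝ | ∃ P : NCPoint ι D.m, NCFeas D P ∧ NCObj D P = c} with hA
  set B := {c : ℝ | ∃ Q : MICPPoint ι, MICPFeas D Q ∧ MICPObj D Q = c} with hB
  have hBA : B ⊆ A := by
    rintro c ⟨Q, hQ, rfl⟩
    obtain ⟨P, h1, h2⟩ := part1 Q hQ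
    exact ⟨P, h1, h2⟩
  have hAlb : ∀ c ∈ A, (0:ℝ) ≤ c := by
    rintro c ⟨P, hf, rfl⟩
    exact Finset.sum_nonneg (fun k _ => Finset.sum_nonneg
      (fun e he => hf.2.1 e he k))
  by_cases hBne : B.Nonempty
  · exact csInf_le_csInf ⟨0, hAlb⟩ hBne hBA
  · rw [Set.not_nonempty_iff_eq_empty] at hBne
    rw [hBne, Real.sInf_empty]
    by_cases hAne : A.Nonempty
    · obtain ⟨c, P, hf, hc⟩ := hAne
      have hSnn : 0 ≤ ∑ e ∈ outE D (Sum.inr false), ∑ k, P.y e k :=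
        Finset.sum_nonneg (fun e he => Finset.sum_nonneg
          (fun k _ => ny_nonneg hf (Finset.mem_filter.mp he).1 k))
      rcases eq_or_lt_of_le hSnn with hS0 | hSpos
      · have hobj0 : NCObj D P = 0 := obj_zero hf hS0.symm
        apply csInf_le ⟨0, hAlb⟩
        exact ⟨P, hf, hobj0⟩
      · exfalso
        have hfeas := agg_feas hf hSpos
        have : MICPObj D (aggQ D P) ∈ B := ⟨aggQ D P, hfeas, rfl⟩
        rw [hBne] at this
        exact this
    · rw [Set.not_nonempty_iff_eq_empty] at hAne
      rw [hAne, Real.sInf_empty]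


end
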